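/- Let A, B, X, Y be m×m complex matrices satisfying A·X = X, Y·B = Y, and A·Y = X·B. Then rank(X − Y) = rank(colBlock(X, Y)) + rank(rowBlock(X, Y)) − rank(X) − rank(Y). -/

import Mathlib

set_option synthInstance.maxHeartbeats 400000
set_option maxHeartbeats 1000000

open Matrix Module Submodule LinearMap

/-- If `A * X = X`, `Y * B = Y` and `A * Y = X * B`, then
`rank (X - Y) = rank [X; Y] + rank [X, Y] - rank X - rank Y`. -/
theorem stmt_1 (m : ℕ) (A B X Y : Matrix (Fin m) (Fin m) ℂ)
    (h1 : A * X = X) (h2 : Y * B = Y) (h3 : A * Y = X * B) :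
    ((X - Y).rank : ℤ) =
      ((Matrix.fromRows X Y).rank : ℤ) + ((Matrix.fromCols X Y).rank : ℤ)
        - (X.rank : ℤ) - (Y.rank : ℤ) := by
  set f := X.mulVecLin with hf
  set g := Y.mulVecLin with hg
  -- ker of fromRows
  have hkerR : LinearMap.ker (Matrix.fromRows X Y).mulVecLin = ker f ⊓ ker g := by
    ext v
    simp only [LinearMap.mem_ker, Submodule.mem_inf, mulVecLin_apply, fromRows_mulVec, hf, hg]
    constructor
    · intro h
      constructor
      · funext i; exact congrFun h (Sum.inl i)
      · funext i; exact congrFun h (Sum.inr i)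
    · rintro ⟨ha, hb⟩
      funext i
      cases i with
      | inl i => simpa using congrFun ha i
      | inr i => simpa using congrFun hb i
  -- range of fromColumns
  have hranC : LinearMap.range (Matrix.fromCols X Y).mulVecLin = range f ⊔ range g := by
    apply le_antisymm
    · rintro w ⟨u, rfl⟩
      have : (Matrix.fromCols X Y).mulVecLin u
          = f (u ∘ Sum.inl) + g (u ∘ Sum.inr) := by
        have := Matrix.fromCols_mulVec_sumElim X Y (u ∘ Sum.inl) (u ∘ Sum.inr)
        simpa [mulVecLin_apply, Sum.elim_comp_inl_inr, hf, hg] using this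
      rw [this]
      exact Submodule.add_mem_sup (LinearMap.mem_range_self f _) (LinearMap.mem_range_self g _)
    · rw [sup_le_iff]
      constructor
      · rintro w ⟨u, rfl⟩
        exact ⟨Sum.elim u 0, by simp [mulVecLin_apply, Matrix.fromCols_mulVec_sumElim, hf]⟩
      · rintro w ⟨u, rfl⟩
        exact ⟨Sum.elim 0 u, by simp [mulVecLin_apply, Matrix.fromCols_mulVec_sumElim, hg]⟩
  -- key map
  have hsub : ker f ⊓ ker g ≤ ker (f - g) := by
    intro v hv
    obtain ⟨hv1, hv2⟩ := Submodule.mem_inf.mp hv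
    rw [LinearMap.mem_ker] at hv1 hv2 ⊢
    rw [LinearMap.sub_apply, hv1, hv2, sub_zero]
  set φ : ↥(ker (f - g)) →ₗ[ℂ] (Fin m → ℂ) := f.comp (Submodule.subtype _) with hφ
  have hfg : ∀ v : ↥(ker (f - g)), f v = g v := by
    intro v
    have := v.2
    simp only [LinearMap.mem_ker, LinearMap.sub_apply, sub_eq_zero] at this
    exact this
  have hkerφ : LinearMap.ker φ = Submodule.comap (ker (f - g)).subtype (ker f ⊓ ker g) := by
    ext v
    simp only [LinearMap.mem_ker, hφ, LinearMap.comp_apply, Submodule.mem_comap,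
      Submodule.subtype_apply, Submodule.mem_inf]
    constructor
    · intro h; exact ⟨h, by rw [← hfg v]; exact h⟩
    · rintro ⟨h, -⟩; exact h
  have hranφ : LinearMap.range φ = range f ⊓ range g := by
    apply le_antisymm
    · rintro w ⟨v, rfl⟩
      refine ⟨LinearMap.mem_range_self f _, ?_⟩
      rw [hφ]
      exact ⟨v, (hfg v).symm⟩
    · rintro w ⟨⟨u, hu⟩, ⟨t, ht⟩⟩
      -- w = X *ᵥ u = Y *ᵥ t ; take v := B *ᵥ t
      have hfv : f (B *ᵥ t) = w := by
        have e1 : X *ᵥ (B *ᵥ t) = A *ᵥ (Y *ᵥ t) := by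
          rw [mulVec_mulVec, mulVec_mulVec, h3]
        have e2 : A *ᵥ (X *ᵥ u) = X *ᵥ u := by
          rw [mulVec_mulVec, h1]
        simp only [hf, mulVecLin_apply] at hu ⊢
        simp only [hg, mulVecLin_apply] at ht
        rw [e1, ht, ← hu, e2, hu]
      have hgv : g (B *ᵥ t) = w := by
        simp only [hg, mulVecLin_apply] at ht ⊢
        rw [mulVec_mulVec, h2, ht]
      refine ⟨⟨B *ᵥ t, ?_⟩, hfv⟩
      simp only [LinearMap.mem_ker, LinearMap.sub_apply, hfv, hgv, sub_self]
  -- dimension identities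
  have key : finrank ℂ (ker (f - g)) =
      finrank ℂ ↥(range f ⊓ range g) + finrank ℂ ↥(ker f ⊓ ker g) := by
    have h0 := LinearMap.finrank_range_add_finrank_ker φ
    rw [hranφ, hkerφ] at h0
    have h1 : finrank ℂ ↥(Submodule.comap (ker (f - g)).subtype (ker f ⊓ ker g))
        = finrank ℂ ↥(ker f ⊓ ker g) :=
      (Submodule.comapSubtypeEquivOfLe hsub).finrank_eq
    omega
  have e1 : (X - Y).rank + finrank ℂ (ker (f - g)) = m := by
    have := LinearMap.finrank_range_add_finrank_ker (f - g)
    have hm : (X - Y).mulVecLin = f - g := by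
      ext v
      simp [hf, hg, Matrix.sub_mulVec]
    rw [Matrix.rank, hm, this]
    simp
  have e2 : (Matrix.fromRows X Y).rank + finrank ℂ ↥(ker f ⊓ ker g) = m := by
    have := LinearMap.finrank_range_add_finrank_ker (Matrix.fromRows X Y).mulVecLin
    rw [hkerR] at this
    rw [Matrix.rank, this]
    simp
  have e3 : (Matrix.fromCols X Y).rank + finrank ℂ ↥(range f ⊓ range g)
      = X.rank + Y.rank := by
    rw [Matrix.rank, Matrix.rank, Matrix.rank, hranC]
    exact Submodule.finrank_sup_add_finrank_inf_eq _ _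
  omega
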